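/- arXiv:1605.08366 — 3 statements merged into one kernel-verified Lean document; each statement's English description precedes it below -/
import Mathlib

section
/- Let H be a digraph and let G be a subdigraph-minimal digraph containing H as a strong minor (that is, G contains H as a strong minor but no proper subdigraph of G does). Then H and G have the same number of strongly connected components. -/
/-- A digraph: a finite vertex set and a finite multiset of arcs (ordered pairs of
distinct vertices; parallel arcs allowed, no loops). -/
structure Digr where
  verts : Finset ℕ
  arcs : Multiset (ℕ × ℕ)
  mem_fst : ∀ e ∈ arcs, Prod.fst e ∈ verts
  mem_snd : ∀ e ∈ arcs, Prod.snd e ∈ verts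
  no_loops : ∀ e ∈ arcs, Prod.fst e ≠ Prod.snd e

namespace Digr

/-- `H` is a subdigraph of `G`. -/
def IsSubdigraph (H G : Digr) : Prop := H.verts ⊆ G.verts ∧ H.arcs ≤ G.arcs

def Adj (G : Digr) (u v : ℕ) : Prop := (u, v) ∈ G.arcs

/-- Reachability by directed paths. -/
def Reach (G : Digr) : ℕ → ℕ → Prop := Relation.ReflTransGen G.Adj

def StronglyConnected (G : Digr) : Prop :=
  G.verts.Nonempty ∧ ∀ u ∈ G.verts, ∀ v ∈ G.verts, G.Reach u v

/-- Reachability in the underlying undirected graph. -/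
def UReach (G : Digr) : ℕ → ℕ → Prop :=
  Relation.ReflTransGen (fun u v => G.Adj u v ∨ G.Adj v u)

/-- Every connected component of the underlying undirected graph induces a
strongly connected subdigraph. -/
def ComponentsStronglyConnected (G : Digr) : Prop :=
  ∀ u ∈ G.verts, ∀ v ∈ G.verts, G.UReach u v → G.Reach u v

def MutuallyReach (G : Digr) (u v : ℕ) : Prop := G.Reach u v ∧ G.Reach v u

/-- The number of strongly connected components of `G`. -/
noncomputable def numSCC (G : Digr) : ℕ :=
  Set.ncard {C : Set ℕ | ∃ v ∈ G.verts, C = {u | u ∈ G.verts ∧ G.MutuallyReach u v}}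

/-- Isomorphism of digraphs (respecting arc multiplicities). -/
def Iso (G H : Digr) : Prop :=
  ∃ φ : ℕ → ℕ, Set.BijOn φ ↑G.verts ↑H.verts ∧
    ∀ u v : ℕ, u ∈ G.verts → v ∈ G.verts →
      Multiset.count (u, v) G.arcs = Multiset.count (φ u, φ v) H.arcs

/-- Deletion of a set of vertices (with all incident arcs). -/
def deleteVerts (G : Digr) (X : Finset ℕ) : Digr where
  verts := G.verts \ X
  arcs := G.arcs.filter fun e => e.1 ∉ X ∧ e.2 ∉ X
  mem_fst := by
    intro e he
    rw [Multiset.mem_filter] at he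
    exact Finset.mem_sdiff.mpr ⟨G.mem_fst e he.1, he.2.1⟩
  mem_snd := by
    intro e he
    rw [Multiset.mem_filter] at he
    exact Finset.mem_sdiff.mpr ⟨G.mem_snd e he.1, he.2.2⟩
  no_loops := by
    intro e he
    rw [Multiset.mem_filter] at he
    exact G.no_loops e he.1

/-- Deletion of a (multi)set of arcs. -/
def deleteArcs (G : Digr) (Y : Multiset (ℕ × ℕ)) : Digr where
  verts := G.verts
  arcs := G.arcs - Y
  mem_fst := fun e he => G.mem_fst e (Multiset.mem_of_le tsub_le_self he)
  mem_snd := fun e he => G.mem_snd e (Multiset.mem_of_le tsub_le_self he)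
  no_loops := fun e he => G.no_loops e (Multiset.mem_of_le tsub_le_self he)

/-- `H` is obtained from `G` by contracting the strongly connected subdigraph `S`
to the single (new) vertex `vS`. -/
def IsSCContractionOf (H G S : Digr) (vS : ℕ) : Prop :=
  S.IsSubdigraph G ∧ S.StronglyConnected ∧ vS ∉ G.verts \ S.verts ∧
  H.verts = (G.verts \ S.verts) ∪ {vS} ∧
  H.arcs = (G.arcs.filter fun e => ¬(e.1 ∈ S.verts ∧ e.2 ∈ S.verts)).map
    fun e => (if e.1 ∈ S.verts then vS else e.1, if e.2 ∈ S.verts then vS else e.2)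

def SCContractStep (G H : Digr) : Prop := ∃ S vS, IsSCContractionOf H G S vS

/-- `H` is a strong minor of `G`. -/
def StrongMinorOf (H G : Digr) : Prop :=
  ∃ G₀ H₀ : Digr, G₀.IsSubdigraph G ∧ Relation.ReflTransGen SCContractStep G₀ H₀ ∧ H₀.Iso H

/-- The arc `(u, v)` is contractible: it is the only arc with head `v`, or the only
arc with tail `u`. -/
def Contractible (G : Digr) (u v : ℕ) : Prop :=
  (u, v) ∈ G.arcs ∧
  (G.arcs.filter (fun a => a.2 = v) = {(u, v)} ∨
   G.arcs.filter (fun a => a.1 = u) = {(u, v)})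

/-- `H` is obtained from `G` by contracting the contractible arc `(u, v)`
(identifying `u` and `v` into the vertex `u`). -/
def IsButterflyContractionOf (H G : Digr) (u v : ℕ) : Prop :=
  G.Contractible u v ∧
  H.verts = G.verts.erase v ∧
  H.arcs = (G.arcs.filter fun a => ¬((a.1 = u ∧ a.2 = v) ∨ (a.1 = v ∧ a.2 = u))).map
    fun a => (if a.1 = v then u else a.1, if a.2 = v then u else a.2)

def ButterflyStep (G H : Digr) : Prop := ∃ u v, IsButterflyContractionOf H G u v

/-- `H` is a butterfly minor of `G`. -/
def ButterflyMinorOf (H G : Digr) : Prop :=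
  ∃ G₀ H₀ : Digr, G₀.IsSubdigraph G ∧ Relation.ReflTransGen ButterflyStep G₀ H₀ ∧ H₀.Iso H

/-- `H` is obtained from `G` by subdividing one arc (replacing `(u, v)` by a directed
path `u, w, v` through a new vertex `w`). -/
def SubdivStep (G H : Digr) : Prop :=
  ∃ u v w : ℕ, (u, v) ∈ G.arcs ∧ w ∉ G.verts ∧
    H.verts = insert w G.verts ∧
    H.arcs = (u, w) ::ₘ (w, v) ::ₘ G.arcs.erase (u, v)

/-- `H` is a topological minor of `G`: some subdivision of a digraph isomorphic to `H`
is a subdigraph of `G`. -/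
def TopMinorOf (H G : Digr) : Prop :=
  ∃ H₀ H₁ : Digr, H₀.Iso H ∧ Relation.ReflTransGen SubdivStep H₀ H₁ ∧ H₁.IsSubdigraph G

/-- A directed path in `G`, as a nonempty list of distinct vertices with consecutive arcs. -/
def IsDipath (G : Digr) (l : List ℕ) : Prop :=
  l ≠ [] ∧ l.Nodup ∧ (∀ x ∈ l, x ∈ G.verts) ∧ l.Chain' (fun a b => (a, b) ∈ G.arcs)

/-- The multiset of arcs traversed by a list of vertices. -/
def walkArcs (l : List ℕ) : Multiset (ℕ × ℕ) := (l.zip l.tail : List (ℕ × ℕ))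

/-- `G` contains `H` as an immersion: there are an injection of `V(H)` into `V(G)` and,
for each arc of `H`, a directed path of `G` joining the images of its endpoints, these
paths being pairwise arc-disjoint. -/
def ImmersionOf (H G : Digr) : Prop :=
  ∃ φ : ℕ → ℕ, Set.InjOn φ ↑H.verts ∧ (∀ v ∈ H.verts, φ v ∈ G.verts) ∧
    ∃ (L : List (ℕ × ℕ)) (P : List (List ℕ)),
      (L : Multiset (ℕ × ℕ)) = H.arcs ∧ P.length = L.length ∧
      (∀ (i : ℕ) (hP : i < P.length) (hL : i < L.length),
        G.IsDipath (P.get ⟨i, hP⟩) ∧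
        (P.get ⟨i, hP⟩).head? = some (φ (L.get ⟨i, hL⟩).1) ∧
        (P.get ⟨i, hP⟩).getLast? = some (φ (L.get ⟨i, hL⟩).2)) ∧
      (P.map walkArcs).sum ≤ G.arcs

/-- A semicomplete digraph: at least one arc between every pair of distinct vertices. -/
def Semicomplete (G : Digr) : Prop :=
  ∀ u ∈ G.verts, ∀ v ∈ G.verts, u ≠ v → (u, v) ∈ G.arcs ∨ (v, u) ∈ G.arcs

/-- An `s`-semicomplete digraph: every vertex is adjacent to all but at most `s` of the
other vertices. -/
def SSemicomplete (s : ℕ) (G : Digr) : Prop :=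
  ∀ v ∈ G.verts,
    (G.verts.filter fun u => u ≠ v ∧ (u, v) ∉ G.arcs ∧ (v, u) ∉ G.arcs).card ≤ s

/-- A path decomposition of a digraph, as a list of bags. -/
def IsPathDecomp (G : Digr) (B : List (Finset ℕ)) : Prop :=
  (∀ X ∈ B, X ⊆ G.verts) ∧
  (∀ v ∈ G.verts, ∃ i, ∃ h : i < B.length, v ∈ B.get ⟨i, h⟩) ∧
  (∀ e ∈ G.arcs, ∃ i j, ∃ hi : i < B.length, ∃ hj : j < B.length,
      j ≤ i ∧ Prod.fst e ∈ B.get ⟨i, hi⟩ ∧ Prod.snd e ∈ B.get ⟨j, hj⟩) ∧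
  (∀ (v : ℕ) (i j k : ℕ) (_hij : i ≤ j) (hjk : j ≤ k)
      (hi : i < B.length) (hk : k < B.length),
      v ∈ B.get ⟨i, hi⟩ → v ∈ B.get ⟨k, hk⟩ → v ∈ B.get ⟨j, lt_of_le_of_lt hjk hk⟩)

/-- The pathwidth of a digraph. -/
noncomputable def pw (G : Digr) : ℕ :=
  sInf {w | ∃ B : List (Finset ℕ), G.IsPathDecomp B ∧ (B.map Finset.card).foldr max 0 - 1 = w}

/-- An ordering of the vertices of `G`. -/
def IsOrdering (G : Digr) (l : List ℕ) : Prop := (l : Multiset ℕ) = G.verts.val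

/-- The number of arcs (with multiplicity) going from the first `i` vertices of the
ordering `l` to the remaining ones. -/
def cutAt (G : Digr) (l : List ℕ) (i : ℕ) : ℕ :=
  (G.arcs.filter fun e => e.1 ∈ l.take i ∧ e.2 ∉ l.take i).card

/-- The cutwidth of a digraph. -/
noncomputable def ctw (G : Digr) : ℕ :=
  sInf {w | ∃ l : List ℕ, G.IsOrdering l ∧ ∀ i, G.cutAt l i ≤ w}

end Digr

namespace Digr

lemma reach_mono {S G : Digr} (h : S.arcs ≤ G.arcs) {u v : ℕ} (hr : S.Reach u v) :
    G.Reach u v := by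
  induction hr with
  | refl => exact Relation.ReflTransGen.refl
  | tail _ hadj ih => exact ih.tail (Multiset.mem_of_le h hadj)

lemma mutuallyReach_refl (G : Digr) (v : ℕ) : G.MutuallyReach v v :=
  ⟨Relation.ReflTransGen.refl, Relation.ReflTransGen.refl⟩

lemma mutuallyReach_symm {G : Digr} {u v : ℕ} (h : G.MutuallyReach u v) :
    G.MutuallyReach v u := ⟨h.2, h.1⟩

lemma mutuallyReach_trans {G : Digr} {u v w : ℕ} (h1 : G.MutuallyReach u v)
    (h2 : G.MutuallyReach v w) : G.MutuallyReach u w := ⟨h1.1.trans h2.1, h2.2.trans h1.2⟩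

lemma numSCC_eq_of_map (G H : Digr) (f : ℕ → ℕ)
    (hmap : ∀ x ∈ G.verts, f x ∈ H.verts)
    (hsurj : ∀ y ∈ H.verts, ∃ x ∈ G.verts, f x = y)
    (hiff : ∀ u ∈ G.verts, ∀ v ∈ G.verts,
      (G.MutuallyReach u v ↔ H.MutuallyReach (f u) (f v))) :
    G.numSCC = H.numSCC := by
  have himg : ∀ v ∈ G.verts, f '' {u | u ∈ G.verts ∧ G.MutuallyReach u v}
      = {u | u ∈ H.verts ∧ H.MutuallyReach u (f v)} := by
    intro v hv
    ext y
    constructor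
    · rintro ⟨u, ⟨hu, hr⟩, rfl⟩
      exact ⟨hmap u hu, (hiff u hu v hv).1 hr⟩
    · rintro ⟨hy, hr⟩
      obtain ⟨x, hx, rfl⟩ := hsurj y hy
      exact ⟨x, ⟨hx, (hiff x hx v hv).2 hr⟩, rfl⟩
  have hBA : {C : Set ℕ | ∃ v ∈ H.verts, C = {u | u ∈ H.verts ∧ H.MutuallyReach u v}}
      = (Set.image f) ''
        {C : Set ℕ | ∃ v ∈ G.verts, C = {u | u ∈ G.verts ∧ G.MutuallyReach u v}} := by
    ext C
    constructor
    · rintro ⟨y, hy, rfl⟩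
      obtain ⟨v, hv, rfl⟩ := hsurj y hy
      exact ⟨_, ⟨v, hv, rfl⟩, himg v hv⟩
    · rintro ⟨C0, ⟨v, hv, rfl⟩, rfl⟩
      exact ⟨f v, hmap v hv, himg v hv⟩
  have hinj : Set.InjOn (Set.image f)
      {C : Set ℕ | ∃ v ∈ G.verts, C = {u | u ∈ G.verts ∧ G.MutuallyReach u v}} := by
    rintro C1 ⟨u, hu, rfl⟩ C2 ⟨v, hv, rfl⟩ heq
    rw [himg u hu, himg v hv] at heq
    have hmem : f u ∈ {y | y ∈ H.verts ∧ H.MutuallyReach y (f u)} :=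
      ⟨hmap u hu, mutuallyReach_refl _ _⟩
    rw [heq] at hmem
    have huv : G.MutuallyReach u v := (hiff u hu v hv).2 hmem.2
    ext w
    simp only [Set.mem_setOf_eq]
    exact ⟨fun ⟨hw, h⟩ => ⟨hw, mutuallyReach_trans h huv⟩,
      fun ⟨hw, h⟩ => ⟨hw, mutuallyReach_trans h (mutuallyReach_symm huv)⟩⟩
  unfold numSCC
  rw [hBA, Set.ncard_image_of_injOn hinj]

lemma iso_numSCC {G H : Digr} (h : G.Iso H) : G.numSCC = H.numSCC := by
  obtain ⟨φ, hbij, hcnt⟩ := h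
  have hadjGH : ∀ {b c : ℕ}, G.Adj b c → H.Adj (φ b) (φ c) := by
    intro b c hadj
    have hb : b ∈ G.verts := G.mem_fst _ hadj
    have hc : c ∈ G.verts := G.mem_snd _ hadj
    have : 0 < Multiset.count (φ b, φ c) H.arcs := by
      rw [← hcnt b c hb hc]
      exact Multiset.count_pos.mpr hadj
    exact Multiset.count_pos.mp this
  have hfwd : ∀ {u v : ℕ}, G.Reach u v → H.Reach (φ u) (φ v) := by
    intro u v hr
    induction hr with
    | refl => exact Relation.ReflTransGen.refl
    | tail _ hadj ih => exact ih.tail (hadjGH hadj)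
  have hbwd : ∀ {x y : ℕ}, H.Reach x y → ∀ a b, a ∈ G.verts → b ∈ G.verts →
      φ a = x → φ b = y → G.Reach a b := by
    intro x y hr
    induction hr with
    | refl =>
      intro a b ha hb hax hbx
      have : a = b := hbij.injOn ha hb (hax.trans hbx.symm)
      subst this; exact Relation.ReflTransGen.refl
    | @tail z y' _ hadj ih =>
      intro a b ha hb hax hby
      have hz : z ∈ (↑H.verts : Set ℕ) := H.mem_fst _ hadj
      obtain ⟨c, hc, hcz⟩ := hbij.surjOn hz
      have h1 : G.Reach a c := ih a c ha hc hax hcz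
      have h2 : G.Adj c b := by
        have : 0 < Multiset.count (φ c, φ b) H.arcs := by
          rw [hcz, hby]; exact Multiset.count_pos.mpr hadj
        rw [← hcnt c b hc hb] at this
        exact Multiset.count_pos.mp this
      exact h1.tail h2
  apply numSCC_eq_of_map G H φ
  · intro x hx; exact hbij.mapsTo hx
  · intro y hy
    obtain ⟨x, hx, rfl⟩ := hbij.surjOn hy
    exact ⟨x, hx, rfl⟩
  · intro u hu v hv
    constructor
    · rintro ⟨h1, h2⟩; exact ⟨hfwd h1, hfwd h2⟩
    · rintro ⟨h1, h2⟩; exact ⟨hbwd h1 u v hu hv rfl rfl, hbwd h2 v u hv hu rfl rfl⟩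

lemma scContractStep_numSCC {G H : Digr} (h : SCContractStep G H) :
    G.numSCC = H.numSCC := by
  obtain ⟨S, vS, hSG, hSC, hvS, hV, hA⟩ := h
  set π : ℕ → ℕ := fun x => if x ∈ S.verts then vS else x with hπ
  have hkey : ∀ a ∈ G.verts, π a = vS → a ∈ S.verts := by
    intro a ha hpa
    by_contra hns
    rw [hπ] at hpa
    simp only [if_neg hns] at hpa
    subst hpa
    exact hvS (Finset.mem_sdiff.mpr ⟨ha, hns⟩)
  have hfwd : ∀ {u v : ℕ}, G.Reach u v → H.Reach (π u) (π v) := by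
    intro u v hr
    induction hr with
    | refl => exact Relation.ReflTransGen.refl
    | @tail b c _ hadj ih =>
      by_cases hbc : b ∈ S.verts ∧ c ∈ S.verts
      · have : π b = π c := by rw [hπ]; simp [if_pos hbc.1, if_pos hbc.2]
        rwa [← this]
      · refine ih.tail ?_
        show (π b, π c) ∈ H.arcs
        rw [hA]
        refine Multiset.mem_map.mpr ⟨(b, c), Multiset.mem_filter.mpr ⟨hadj, hbc⟩, rfl⟩
  have hfib : ∀ a b, a ∈ G.verts → b ∈ G.verts → π a = π b → G.Reach a b := by
    intro a b ha hb hab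
    by_cases has : a ∈ S.verts
    · have hpb : π b = vS := by rw [← hab, hπ]; simp [if_pos has]
      have hbs : b ∈ S.verts := hkey b hb hpb
      exact reach_mono hSG.2 (hSC.2 a has b hbs)
    · by_cases hbs : b ∈ S.verts
      · have hpa : π a = vS := by rw [hab, hπ]; simp [if_pos hbs]
        exact absurd (hkey a ha hpa) has
      · rw [hπ] at hab
        simp only [if_neg has, if_neg hbs] at hab
        subst hab; exact Relation.ReflTransGen.refl
  have hbwd : ∀ {x y : ℕ}, H.Reach x y → ∀ a b, a ∈ G.verts → b ∈ G.verts →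
      π a = x → π b = y → G.Reach a b := by
    intro x y hr
    induction hr with
    | refl =>
      intro a b ha hb hax hbx
      exact hfib a b ha hb (hax.trans hbx.symm)
    | @tail z y' _ hadj ih =>
      intro a b ha hb hax hby
      have hadj' : (z, y') ∈ H.arcs := hadj
      rw [hA] at hadj'
      obtain ⟨e, he, heq⟩ := Multiset.mem_map.mp hadj'
      have he' := Multiset.mem_filter.mp he
      have he1 : e.1 ∈ G.verts := G.mem_fst e he'.1
      have he2 : e.2 ∈ G.verts := G.mem_snd e he'.1
      have hz1 : π e.1 = z := congrArg Prod.fst heq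
      have hz2 : π e.2 = y' := congrArg Prod.snd heq
      have h1 : G.Reach a e.1 := ih a e.1 ha he1 hax hz1
      have h2 : G.Adj e.1 e.2 := by
        show (e.1, e.2) ∈ G.arcs
        rw [Prod.mk.eta]; exact he'.1
      have h3 : G.Reach e.2 b := hfib e.2 b he2 hb (hz2.trans hby.symm)
      exact (h1.tail h2).trans h3
  apply numSCC_eq_of_map G H π
  · intro x hx
    rw [hV]
    by_cases hxs : x ∈ S.verts
    · have : π x = vS := by rw [hπ]; simp [if_pos hxs]
      rw [this]
      exact Finset.mem_union_right _ (Finset.mem_singleton_self vS)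
    · have : π x = x := by rw [hπ]; simp [if_neg hxs]
      rw [this]
      exact Finset.mem_union_left _ (Finset.mem_sdiff.mpr ⟨hx, hxs⟩)
  · intro y hy
    rw [hV] at hy
    rcases Finset.mem_union.mp hy with hy' | hy'
    · have hy'' := Finset.mem_sdiff.mp hy'
      refine ⟨y, hy''.1, ?_⟩
      rw [hπ]; simp [if_neg hy''.2]
    · obtain ⟨s, hs⟩ := hSC.1
      refine ⟨s, hSG.1 hs, ?_⟩
      rw [hπ]
      simp only [if_pos hs]
      exact (Finset.mem_singleton.mp hy').symm
  · intro u hu v hv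
    constructor
    · rintro ⟨h1, h2⟩; exact ⟨hfwd h1, hfwd h2⟩
    · rintro ⟨h1, h2⟩; exact ⟨hbwd h1 u v hu hv rfl rfl, hbwd h2 v u hv hu rfl rfl⟩

end Digr
/-- a subdigraph-minimal digraph containing `H` as a strong minor has the
same number of strongly connected components as `H`. -/
theorem numSCC_minimal_strong_minor (H G : Digr)
    (hG : H.StrongMinorOf G)
    (hmin : ∀ G' : Digr, G'.IsSubdigraph G → G' ≠ G → ¬ H.StrongMinorOf G') :
    H.numSCC = G.numSCC := by
  obtain ⟨G₀, H₀, hsub, hsteps, hiso⟩ := hG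
  have hG0 : G₀ = G := by
    by_contra hne
    exact hmin G₀ hsub hne ⟨G₀, H₀, ⟨Finset.Subset.refl _, le_rfl⟩, hsteps, hiso⟩
  have h1 : G₀.numSCC = H₀.numSCC := by
    clear hiso hG0
    induction hsteps with
    | refl => rfl
    | tail _ hstep ih => exact ih.trans (Digr.scContractStep_numSCC hstep)
  have h2 : H₀.numSCC = H.numSCC := Digr.iso_numSCC hiso
  rw [← h2, ← h1, hG0]
end

section
/- Let H be a digraph whose connected components are strongly connected (i.e., each connected component of the underlying undirected graph induces a strongly connected subdigraph), and let G be a subdigraph-minimal digraph containing H as a topological minor (that is, G contains H as a topological minor but no proper subdigraph of G does). Then H and G have the same number of strongly connected components. -/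
namespace Digr

/-! ### Auxiliary machinery for Statement 11 -/

/-- The strongly connected component (as a set) of `v` in `G`. -/
def scc (G : Digr) (v : ℕ) : Set ℕ := {u | u ∈ G.verts ∧ G.MutuallyReach u v}

lemma numSCC_eq_ncard_image (G : Digr) : G.numSCC = (G.scc '' ↑G.verts).ncard := by
  unfold numSCC
  congr 1
  ext C
  simp only [Set.mem_setOf_eq, Set.mem_image, Finset.mem_coe, scc]
  constructor
  · rintro ⟨v, hv, rfl⟩; exact ⟨v, hv, rfl⟩
  · rintro ⟨v, hv, rfl⟩; exact ⟨v, hv, rfl⟩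

lemma reach_lift {G H : Digr} {f : ℕ → ℕ}
    (h : ∀ a b, G.Adj a b → H.Reach (f a) (f b)) {a b : ℕ}
    (hr : G.Reach a b) : H.Reach (f a) (f b) := by
  induction hr with
  | refl => exact Relation.ReflTransGen.refl
  | tail _ h2 ih => exact ih.trans (h _ _ h2)

lemma ureach_lift {G H : Digr} {f : ℕ → ℕ}
    (h : ∀ a b, (G.Adj a b ∨ G.Adj b a) → H.UReach (f a) (f b)) {a b : ℕ}
    (hr : G.UReach a b) : H.UReach (f a) (f b) := by
  induction hr with
  | refl => exact Relation.ReflTransGen.refl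
  | tail _ h2 ih => exact ih.trans (h _ _ h2)

lemma iso_pack {G H : Digr} (h : G.Iso H) :
    ∃ φ ψ : ℕ → ℕ,
      (∀ x ∈ G.verts, φ x ∈ H.verts) ∧
      (∀ y ∈ H.verts, ψ y ∈ G.verts) ∧
      (∀ x ∈ G.verts, ψ (φ x) = x) ∧
      (∀ y ∈ H.verts, φ (ψ y) = y) ∧
      (∀ a b, G.Adj a b → H.Adj (φ a) (φ b)) ∧
      (∀ a b, H.Adj a b → G.Adj (ψ a) (ψ b)) := by
  obtain ⟨φ, hbij, hcount⟩ := h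
  set ψ := Function.invFunOn φ ↑G.verts with hψdef
  have hφm : ∀ x ∈ G.verts, φ x ∈ H.verts := by
    intro x hx
    exact Finset.mem_coe.mp (hbij.mapsTo (Finset.mem_coe.mpr hx))
  have hψm : ∀ y ∈ H.verts, ψ y ∈ G.verts := by
    intro y hy
    obtain ⟨x, hx, hxy⟩ := hbij.surjOn (Finset.mem_coe.mpr hy)
    exact Finset.mem_coe.mp (Function.invFunOn_mem ⟨x, hx, hxy⟩)
  have hφψ : ∀ y ∈ H.verts, φ (ψ y) = y := by
    intro y hy
    obtain ⟨x, hx, hxy⟩ := hbij.surjOn (Finset.mem_coe.mpr hy)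
    exact Function.invFunOn_eq ⟨x, hx, hxy⟩
  have hψφ : ∀ x ∈ G.verts, ψ (φ x) = x := by
    intro x hx
    exact hbij.injOn (Finset.mem_coe.mpr (hψm _ (hφm x hx))) (Finset.mem_coe.mpr hx)
      (hφψ _ (hφm x hx))
  refine ⟨φ, ψ, hφm, hψm, hψφ, hφψ, ?_, ?_⟩
  · intro a b hab
    have ha := G.mem_fst (a, b) hab
    have hb := G.mem_snd (a, b) hab
    have hc := hcount a b ha hb
    have : 0 < Multiset.count (a, b) G.arcs := Multiset.count_pos.mpr hab
    rw [hc] at this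
    exact Multiset.count_pos.mp this
  · intro a b hab
    have ha := H.mem_fst (a, b) hab
    have hb := H.mem_snd (a, b) hab
    have hc := hcount (ψ a) (ψ b) (hψm a ha) (hψm b hb)
    rw [hφψ a ha, hφψ b hb] at hc
    have : 0 < Multiset.count (a, b) H.arcs := Multiset.count_pos.mpr hab
    rw [← hc] at this
    exact Multiset.count_pos.mp this

lemma iso_csc {G H : Digr} (h : G.Iso H) (hH : H.ComponentsStronglyConnected) :
    G.ComponentsStronglyConnected := by
  obtain ⟨φ, ψ, hφm, hψm, hψφ, hφψ, hadj, hadj'⟩ := iso_pack h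
  intro x hx y hy hur
  have h1 : H.UReach (φ x) (φ y) :=
    ureach_lift (fun a b hab => Relation.ReflTransGen.single
      (hab.elim (fun h' => Or.inl (hadj _ _ h')) (fun h' => Or.inr (hadj _ _ h')))) hur
  have h2 : H.Reach (φ x) (φ y) := hH _ (hφm x hx) _ (hφm y hy) h1
  have h3 : G.Reach (ψ (φ x)) (ψ (φ y)) :=
    reach_lift (fun a b hab => Relation.ReflTransGen.single (hadj' _ _ hab)) h2
  rwa [hψφ x hx, hψφ y hy] at h3

lemma subdiv_invariant {G G' : Digr} (h : SubdivStep G G')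
    (hc : G.ComponentsStronglyConnected) :
    G'.ComponentsStronglyConnected ∧ G'.numSCC = G.numSCC := by
  obtain ⟨u, v, w, huv, hw, hV, hA⟩ := h
  have hu : u ∈ G.verts := G.mem_fst _ huv
  have hv : v ∈ G.verts := G.mem_snd _ huv
  have hmem' : ∀ a b : ℕ, G'.Adj a b ↔
      ((a, b) = (u, w) ∨ (a, b) = (w, v) ∨ (a, b) ∈ G.arcs.erase (u, v)) := by
    intro a b
    show (a, b) ∈ G'.arcs ↔ _
    rw [hA]
    simp [Multiset.mem_cons]
  have hauw : G'.Adj u w := (hmem' u w).mpr (Or.inl rfl)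
  have hawv : G'.Adj w v := (hmem' w v).mpr (Or.inr (Or.inl rfl))
  have hfwdAdj : ∀ a b, G.Adj a b → G'.Reach a b := by
    intro a b hab
    by_cases h1 : (a, b) = (u, v)
    · rw [Prod.mk.injEq] at h1
      obtain ⟨rfl, rfl⟩ := h1
      exact (Relation.ReflTransGen.single hauw).trans (Relation.ReflTransGen.single hawv)
    · exact Relation.ReflTransGen.single
        ((hmem' a b).mpr (Or.inr (Or.inr ((Multiset.mem_erase_of_ne h1).mpr hab))))
  have hfwd : ∀ a b, G.Reach a b → G'.Reach a b := by
    intro a b hr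
    exact reach_lift (f := id) hfwdAdj hr
  set f : ℕ → ℕ := fun x => if x = w then v else x with hfdef
  have hfw : f w = v := if_pos rfl
  have hfx : ∀ x, x ≠ w → f x = x := fun x hx => if_neg hx
  have hfmem : ∀ x ∈ G.verts, f x = x := fun x hx => hfx x (fun h' => hw (h' ▸ hx))
  have hbwdAdj : ∀ a b, G'.Adj a b → G.Reach (f a) (f b) := by
    intro a b hab
    rcases (hmem' a b).mp hab with h1 | h1 | h1
    · rw [Prod.mk.injEq] at h1
      rw [h1.1, h1.2, hfmem u hu, hfw]
      exact Relation.ReflTransGen.single huv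
    · rw [Prod.mk.injEq] at h1
      rw [h1.1, h1.2, hfmem v hv, hfw]
      exact Relation.ReflTransGen.refl
    · have hab' := Multiset.mem_of_mem_erase h1
      have ha : a ∈ G.verts := G.mem_fst _ hab'
      have hb : b ∈ G.verts := G.mem_snd _ hab'
      rw [hfmem a ha, hfmem b hb]
      exact Relation.ReflTransGen.single hab'
  have hbwd : ∀ a b, G'.Reach a b → G.Reach (f a) (f b) :=
    fun a b => reach_lift hbwdAdj
  have hbwd' : ∀ a b, a ∈ G.verts → b ∈ G.verts → G'.Reach a b → G.Reach a b := by
    intro a b ha hb hr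
    have := hbwd a b hr
    rwa [hfmem a ha, hfmem b hb] at this
  have hUvu : G.UReach v u := Relation.ReflTransGen.single (Or.inr huv)
  have hvu : G.Reach v u := hc v hv u hu hUvu
  have hvw' : G'.Reach v w := (hfwd v u hvu).trans (Relation.ReflTransGen.single hauw)
  have hwv' : G'.Reach w v := Relation.ReflTransGen.single hawv
  have hMR : ∀ a b, a ∈ G.verts → b ∈ G.verts →
      (G'.MutuallyReach a b ↔ G.MutuallyReach a b) := by
    intro a b ha hb
    constructor
    · rintro ⟨h1, h2⟩; exact ⟨hbwd' _ _ ha hb h1, hbwd' _ _ hb ha h2⟩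
    · rintro ⟨h1, h2⟩; exact ⟨hfwd _ _ h1, hfwd _ _ h2⟩
  have hfv : ∀ z ∈ G'.verts, f z ∈ G.verts := by
    intro z hz
    rw [hV] at hz
    rcases Finset.mem_insert.mp hz with rfl | hz'
    · rw [hfw]; exact hv
    · rw [hfmem z hz']; exact hz'
  have hwmem' : w ∈ G'.verts := by rw [hV]; exact Finset.mem_insert_self _ _
  have hcsc : G'.ComponentsStronglyConnected := by
    have hUbwdAdj : ∀ a b, (G'.Adj a b ∨ G'.Adj b a) → G.UReach (f a) (f b) := by
      intro a b hab
      rcases hab with hab | hab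
      · rcases (hmem' a b).mp hab with h1 | h1 | h1
        · rw [Prod.mk.injEq] at h1
          rw [h1.1, h1.2, hfmem u hu, hfw]
          exact Relation.ReflTransGen.single (Or.inl huv)
        · rw [Prod.mk.injEq] at h1
          rw [h1.1, h1.2, hfmem v hv, hfw]
          exact Relation.ReflTransGen.refl
        · have hab' := Multiset.mem_of_mem_erase h1
          rw [hfmem a (G.mem_fst _ hab'), hfmem b (G.mem_snd _ hab')]
          exact Relation.ReflTransGen.single (Or.inl hab')
      · rcases (hmem' b a).mp hab with h1 | h1 | h1
        · rw [Prod.mk.injEq] at h1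
          rw [h1.2, h1.1, hfmem u hu, hfw]
          exact Relation.ReflTransGen.single (Or.inr huv)
        · rw [Prod.mk.injEq] at h1
          rw [h1.2, h1.1, hfmem v hv, hfw]
          exact Relation.ReflTransGen.refl
        · have hab' := Multiset.mem_of_mem_erase h1
          rw [hfmem a (G.mem_snd _ hab'), hfmem b (G.mem_fst _ hab')]
          exact Relation.ReflTransGen.single (Or.inr hab')
    intro x hx y hy hur
    have h1 : G.UReach (f x) (f y) := ureach_lift hUbwdAdj hur
    have h2 : G.Reach (f x) (f y) := hc _ (hfv x hx) _ (hfv y hy) h1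
    have h3 : G'.Reach (f x) (f y) := hfwd _ _ h2
    have h4 : G'.Reach x (f x) := by
      by_cases hxw : x = w
      · subst hxw; rw [hfw]; exact hwv'
      · rw [hfx x hxw]
        exact Relation.ReflTransGen.refl
    have h5 : G'.Reach (f y) y := by
      by_cases hyw : y = w
      · subst hyw; rw [hfw]; exact hvw'
      · rw [hfx y hyw]
        exact Relation.ReflTransGen.refl
    exact h4.trans (h3.trans h5)
  refine ⟨hcsc, ?_⟩
  have hsccdec : ∀ x ∈ G.verts, G'.scc x = G.scc x ∪ {y | y = w ∧ v ∈ G.scc x} := by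
    intro x hx
    ext y
    simp only [scc, Set.mem_union, Set.mem_setOf_eq]
    by_cases hyw : y = w
    · subst hyw
      constructor
      · rintro ⟨_, hr1, hr2⟩
        refine Or.inr ⟨rfl, hv, ?_, ?_⟩
        · exact (hMR v x hv hx).mp ⟨hvw'.trans hr1, hr2.trans hwv'⟩ |>.1
        · exact (hMR v x hv hx).mp ⟨hvw'.trans hr1, hr2.trans hwv'⟩ |>.2
      · rintro (⟨hyv, _⟩ | ⟨_, _, hmr⟩)
        · exact absurd hyv hw
        · have hmr' := (hMR v x hv hx).mpr hmr
          exact ⟨hwmem', hwv'.trans hmr'.1, hmr'.2.trans hvw'⟩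
    · constructor
      · rintro ⟨hy', hmr⟩
        rw [hV] at hy'
        rcases Finset.mem_insert.mp hy' with h' | hy
        · exact absurd h' hyw
        · exact Or.inl ⟨hy, (hMR y x hy hx).mp hmr⟩
      · rintro (⟨hy, hmr⟩ | ⟨hyw', _⟩)
        · exact ⟨by rw [hV]; exact Finset.mem_insert_of_mem hy, (hMR y x hy hx).mpr hmr⟩
        · exact absurd hyw' hyw
  have hsccw : G'.scc w = G'.scc v := by
    ext y
    simp only [scc, Set.mem_setOf_eq]
    constructor
    · rintro ⟨h1, h2, h3⟩; exact ⟨h1, h2.trans hwv', hvw'.trans h3⟩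
    · rintro ⟨h1, h2, h3⟩; exact ⟨h1, h2.trans hvw', hwv'.trans h3⟩
  have himg1 : G'.scc '' ↑G'.verts = G'.scc '' ↑G.verts := by
    apply Set.Subset.antisymm
    · rintro C ⟨x, hx, rfl⟩
      have hx2 : x ∈ G'.verts := Finset.mem_coe.mp hx
      rw [hV] at hx2
      rcases Finset.mem_insert.mp hx2 with rfl | hx3
      · exact ⟨v, Finset.mem_coe.mpr hv, hsccw.symm⟩
      · exact ⟨x, Finset.mem_coe.mpr hx3, rfl⟩
    · rintro C ⟨x, hx, rfl⟩
      refine ⟨x, Finset.mem_coe.mpr ?_, rfl⟩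
      rw [hV]
      exact Finset.mem_insert_of_mem (Finset.mem_coe.mp hx)
  have hdiff : ∀ x ∈ G.verts, (G'.scc x) \ {w} = G.scc x := by
    intro x hx
    rw [hsccdec x hx]
    ext y
    simp only [Set.mem_diff, Set.mem_union, Set.mem_setOf_eq, Set.mem_singleton_iff]
    constructor
    · rintro ⟨h1 | ⟨rfl, _⟩, h2⟩
      · exact h1
      · exact absurd rfl h2
    · intro h1
      exact ⟨Or.inl h1, fun hyw => hw (hyw ▸ h1.1)⟩
  have himgF : (fun C => C \ {w}) '' (G'.scc '' ↑G.verts) = G.scc '' ↑G.verts := by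
    ext C
    simp only [Set.mem_image, Finset.mem_coe]
    constructor
    · rintro ⟨D, ⟨x, hx, rfl⟩, rfl⟩
      exact ⟨x, hx, (hdiff x hx).symm⟩
    · rintro ⟨x, hx, rfl⟩
      exact ⟨G'.scc x, ⟨x, hx, rfl⟩, hdiff x hx⟩
  have hinj : Set.InjOn (fun C => C \ {w}) (G'.scc '' ↑G.verts) := by
    rintro C ⟨x1, hx1, rfl⟩ D ⟨x2, hx2, rfl⟩ hCD
    have hx1' : x1 ∈ G.verts := Finset.mem_coe.mp hx1
    have hx2' : x2 ∈ G.verts := Finset.mem_coe.mp hx2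
    simp only at hCD
    rw [hdiff x1 hx1', hdiff x2 hx2'] at hCD
    rw [hsccdec x1 hx1', hsccdec x2 hx2', hCD]
  rw [numSCC_eq_ncard_image, numSCC_eq_ncard_image, himg1, ← himgF,
    Set.ncard_image_of_injOn hinj]

lemma steps_invariant {A B : Digr} (h : Relation.ReflTransGen SubdivStep A B)
    (hc : A.ComponentsStronglyConnected) :
    B.ComponentsStronglyConnected ∧ B.numSCC = A.numSCC := by
  induction h with
  | refl => exact ⟨hc, rfl⟩
  | tail _ hbc ih =>
    obtain ⟨h1, h2⟩ := subdiv_invariant hbc ih.1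
    exact ⟨h1, h2.trans ih.2⟩


end Digr
/-- a subdigraph-minimal digraph containing, as a topological minor, a
digraph `H` whose connected components are strongly connected has the same number of
strongly connected components as `H`. -/
theorem numSCC_minimal_top_minor (H G : Digr)
    (hH : H.ComponentsStronglyConnected)
    (hG : H.TopMinorOf G)
    (hmin : ∀ G' : Digr, G'.IsSubdigraph G → G' ≠ G → ¬ H.TopMinorOf G') :
    H.numSCC = G.numSCC := by
  obtain ⟨H₀, H₁, hiso, hsteps, hsub⟩ := hG
  have hq : H₁ = G := by
    by_contra hne
    exact hmin H₁ hsub hne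
      ⟨H₀, H₁, hiso, hsteps, Finset.Subset.refl _, le_refl _⟩
  subst hq
  have hH₀c : H₀.ComponentsStronglyConnected := Digr.iso_csc hiso hH
  have hH₀n : H₀.numSCC = H.numSCC := Digr.iso_numSCC hiso
  obtain ⟨_, hn⟩ := Digr.steps_invariant hsteps hH₀c
  rw [hn, hH₀n]
end

section
/- Let t ∈ ℕ and let 𝓗 be a class of strongly connected digraphs, each having at least two vertices. Then for every digraph G with cutwidth at most t and every natural number k, at least one of the following holds: (a) G contains k pairwise arc-disjoint 𝓗-subdigraphs; or (b) there is a set Y ⊆ E(G) with |Y| ≤ k·t such that G ∖ Y has no 𝓗-subdigraph. -/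
section Helpers
open Digr

lemma cross_of_rtg {α : Type*} {r : α → α → Prop} {p : α → Prop} {u v : α}
    (h : Relation.ReflTransGen r u v) (hu : p u) : ¬ p v → ∃ a b, r a b ∧ p a ∧ ¬ p b := by
  induction h with
  | refl => exact fun hv => absurd hu hv
  | @tail b c h₁ h₂ ih =>
    intro hv
    by_cases hb : p b
    · exact ⟨b, c, h₂, hb, hv⟩
    · exact ih hb

lemma verts_nonempty_of_iso {J H : Digr} (h : J.Iso H) (hH : H.verts.Nonempty) :
    J.verts.Nonempty := by
  obtain ⟨φ, hbij, _⟩ := h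
  obtain ⟨y, hy⟩ := hH
  obtain ⟨x, hx, _⟩ := hbij.surjOn hy
  exact ⟨x, hx⟩

lemma sc_of_iso {J H : Digr} (h : J.Iso H) (hH : H.StronglyConnected) :
    J.StronglyConnected := by
  obtain ⟨φ, hbij, hcount⟩ := h
  refine ⟨verts_nonempty_of_iso ⟨φ, hbij, hcount⟩ hH.1, ?_⟩
  intro u hu v hv
  have hφu : φ u ∈ H.verts := hbij.mapsTo hu
  have hφv : φ v ∈ H.verts := hbij.mapsTo hv
  have hreach : H.Reach (φ u) (φ v) := hH.2 (φ u) hφu (φ v) hφv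
  have key : ∀ b, Relation.ReflTransGen H.Adj (φ u) b →
      ∀ w ∈ J.verts, φ w = b → J.Reach u w := by
    intro b hb
    induction hb with
    | refl =>
      intro w hw hweq
      have : w = u := hbij.injOn hw hu hweq
      subst this; exact Relation.ReflTransGen.refl
    | @tail c d h₁ h₂ ih =>
      intro w hw hweq
      have hc : c ∈ H.verts := H.mem_fst (c, d) h₂
      obtain ⟨x, hx, hxeq⟩ := hbij.surjOn hc
      have hx' : x ∈ J.verts := hx
      have h1 : J.Reach u x := ih x hx' hxeq
      have hadj : J.Adj x w := by
        have hcnt := hcount x w hx' hw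
        rw [hxeq, hweq] at hcnt
        have : (c, d) ∈ H.arcs := h₂
        have hpos : 0 < Multiset.count (c, d) H.arcs := Multiset.count_pos.mpr this
        exact Multiset.count_pos.mp (hcnt ▸ hpos)
      exact h1.tail hadj
  exact key (φ v) hreach v hv rfl

end Helpers

/-- in digraphs of cutwidth at most `t`, strongly connected subdigraphs from
a class `𝓗` (members having at least two vertices) can be packed or covered with gap `k·t`. -/
theorem bounded_ctw_arc_EP (t : ℕ) (𝓗 : Set Digr)
    (h𝓗 : ∀ H ∈ 𝓗, H.StronglyConnected ∧ 2 ≤ H.verts.card)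
    (G : Digr) (hct : G.ctw ≤ t) (k : ℕ) :
    (∃ D : Fin k → Digr,
      (∀ i, (D i).IsSubdigraph G ∧ ∃ H ∈ 𝓗, (D i).Iso H) ∧
      (∑ i, (D i).arcs) ≤ G.arcs) ∨
    (∃ Y : Multiset (ℕ × ℕ), Y ≤ G.arcs ∧ Y.card ≤ k * t ∧
      ¬ ∃ J : Digr, J.IsSubdigraph (G.deleteArcs Y) ∧ ∃ H ∈ 𝓗, J.Iso H) := by
  classical
  induction k generalizing G with
  | zero =>
    left
    exact ⟨fun i => i.elim0, fun i => i.elim0, by simp⟩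
  | succ k ih =>
    by_cases hex : ∃ J : Digr, J.IsSubdigraph G ∧ ∃ H ∈ 𝓗, J.Iso H
    · -- get a good ordering
      have hne : {w | ∃ l : List ℕ, G.IsOrdering l ∧ ∀ i, G.cutAt l i ≤ w}.Nonempty := by
        refine ⟨Multiset.card G.arcs, G.verts.toList, Finset.coe_toList G.verts, ?_⟩
        intro i
        exact Multiset.card_le_card (Multiset.filter_le _ _)
      obtain ⟨l, hord, hcut⟩ := Nat.sInf_mem hne
      have hcut' : ∀ i, G.cutAt l i ≤ t := fun i => le_trans (hcut i) hct
      have hord' : (l : Multiset ℕ) = G.verts.val := hord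
      have hnodupl : l.Nodup := by
        have h := G.verts.nodup
        rw [← hord'] at h
        exact h
      have hmeml : ∀ x, x ∈ G.verts ↔ x ∈ l := by
        intro x
        rw [← Finset.mem_val, ← hord']
        exact Iff.rfl
      set Pred : ℕ → Prop := fun m => ∃ J : Digr, J.IsSubdigraph G ∧
          (∀ x ∈ J.verts, x ∈ l.take m) ∧ ∃ H ∈ 𝓗, J.Iso H with hPreddef
      have hPl : Pred l.length := by
        obtain ⟨J, hJ, rest⟩ := hex
        exact ⟨J, hJ, fun x hx => by
          rw [List.take_length]; exact (hmeml x).mp (hJ.1 hx), rest⟩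
      have hPex : ∃ m, Pred m := ⟨l.length, hPl⟩
      set i₁ := Nat.find hPex with hi₁def
      have hP1 : Pred i₁ := Nat.find_spec hPex
      have hi₁le : i₁ ≤ l.length := Nat.find_le hPl
      have hi₁pos : 0 < i₁ := by
        rcases Nat.eq_zero_or_pos i₁ with h0 | h
        · exfalso
          have hP0 : Pred 0 := h0 ▸ hP1
          obtain ⟨J, _, hJv, H, hH, hiso⟩ := hP0
          obtain ⟨x, hx⟩ := verts_nonempty_of_iso hiso (h𝓗 H hH).1.1
          simpa using hJv x hx
        · exact h
      have hmin : ¬ Pred (i₁ - 1) := Nat.find_min hPex (Nat.sub_lt hi₁pos one_pos)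
      obtain ⟨D₁, hD₁sub, hD₁verts, H₁, hH₁, hD₁iso⟩ := hP1
      set P : Finset ℕ := (l.take (i₁ - 1)).toFinset with hPdef
      set Gs := G.deleteVerts P with hGsdef
      set ls := l.drop (i₁ - 1) with hlsdef
      set p' : ℕ × ℕ → Prop := fun e => e.1 ∉ P ∧ e.2 ∉ P with hp'def
      have hGsarcs : Gs.arcs = G.arcs.filter p' := rfl
      have hGsverts : Gs.verts = G.verts \ P := rfl
      have hnodtk : (l.take (i₁ - 1)).Nodup := hnodupl.sublist (List.take_sublist _ _)
      have hPval : P.val = (l.take (i₁ - 1) : Multiset ℕ) := by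
        have h0 : P.val = (l.take (i₁ - 1) : Multiset ℕ).dedup := rfl
        rw [h0, Multiset.dedup_eq_self]
        exact hnodtk
      -- ordering of Gs
      have hordGs : Gs.IsOrdering ls := by
        show (ls : Multiset ℕ) = (G.verts \ P).val
        rw [Finset.sdiff_val, hPval, ← hord']
        have hsplit : ((l.take (i₁ - 1) : Multiset ℕ) + (ls : Multiset ℕ)) = (l : Multiset ℕ) := by
          rw [hlsdef]
          exact congrArg (fun x : List ℕ => (x : Multiset ℕ)) (List.take_append_drop (i₁ - 1) l)
        rw [← hsplit, add_tsub_cancel_left]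
      -- cut bound for Gs
      have hcutGs : ∀ m, Gs.cutAt ls m ≤ t := by
        intro m
        have hle : Gs.arcs.filter (fun e => e.1 ∈ ls.take m ∧ e.2 ∉ ls.take m) ≤
            G.arcs.filter (fun e => e.1 ∈ l.take (i₁ - 1 + m) ∧ e.2 ∉ l.take (i₁ - 1 + m)) := by
          rw [hGsarcs, Multiset.filter_filter]
          apply Multiset.monotone_filter_right
          rintro e ⟨⟨c1, c2⟩, ⟨p1, p2⟩⟩
          rw [List.take_add]
          constructor
          · exact List.mem_append_right _ c1
          · intro hmem
            rcases List.mem_append.mp hmem with h | h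
            · exact p2 (List.mem_toFinset.mpr h)
            · exact c2 h
        exact le_trans (Multiset.card_le_card hle) (hcut' (i₁ - 1 + m))
      have hctGs : Gs.ctw ≤ t := Nat.sInf_le ⟨ls, hordGs, hcutGs⟩
      rcases ih Gs hctGs with ⟨Dk, hDk, hDksum⟩ | ⟨Y', hY'le, hY'card, hY'no⟩
      · -- packing
        left
        refine ⟨Fin.cons D₁ Dk, ?_, ?_⟩
        · intro i
          refine Fin.cases ?_ ?_ i
          · exact ⟨hD₁sub, H₁, hH₁, hD₁iso⟩
          · intro j
            obtain ⟨hsub, hiso⟩ := hDk j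
            refine ⟨⟨fun x hx => ?_, le_trans hsub.2 ?_⟩, hiso⟩
            · exact Finset.sdiff_subset (hGsverts ▸ hsub.1 hx)
            · rw [hGsarcs]; exact Multiset.filter_le _ _
        · rw [Fin.sum_univ_succ]
          simp only [Fin.cons_zero, Fin.cons_succ]
          set q : ℕ × ℕ → Prop := fun e => e.1 ∈ l.take i₁ ∧ e.2 ∈ l.take i₁ with hqdef
          have hq : D₁.arcs ≤ G.arcs.filter q :=
            Multiset.le_filter.mpr ⟨hD₁sub.2, fun a ha =>
              ⟨hD₁verts a.1 (D₁.mem_fst a ha), hD₁verts a.2 (D₁.mem_snd a ha)⟩⟩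
          have hp : (∑ i, (Dk i).arcs) ≤ G.arcs.filter p' := by
            rw [← hGsarcs]; exact hDksum
          have hsucc : l.take i₁ = l.take (i₁ - 1) ++ (l[i₁ - 1]?).toList := by
            conv_lhs => rw [show i₁ = (i₁ - 1) + 1 from (Nat.succ_pred_eq_of_pos hi₁pos).symm]
            exact List.take_succ
          have key : ∀ a ∈ G.arcs, ¬ (q a ∧ p' a) := by
            rintro a ha ⟨⟨h1, h2⟩, ⟨h3, h4⟩⟩
            have h3' : a.1 ∉ l.take (i₁ - 1) := fun h => h3 (List.mem_toFinset.mpr h)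
            have h4' : a.2 ∉ l.take (i₁ - 1) := fun h => h4 (List.mem_toFinset.mpr h)
            rw [hsucc] at h1 h2
            rcases List.mem_append.mp h1 with h | h
            · exact h3' h
            rcases List.mem_append.mp h2 with h' | h'
            · exact h4' h'
            have e1 : l[i₁ - 1]? = some a.1 := Option.mem_toList.mp h
            have e2 : l[i₁ - 1]? = some a.2 := Option.mem_toList.mp h'
            exact G.no_loops a ha (by rw [e1] at e2; exact (Option.some_inj.mp e2))
          have hsum : G.arcs.filter q + G.arcs.filter p' ≤ G.arcs := by
            rw [Multiset.filter_add_filter]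
            have h0 : G.arcs.filter (fun a => q a ∧ p' a) = 0 := by
              rw [Multiset.filter_eq_nil]; exact key
            rw [h0, add_zero]
            exact Multiset.filter_le _ _
          exact le_trans (add_le_add hq hp) hsum
      · -- cover
        right
        set c : ℕ × ℕ → Prop := fun e => e.1 ∈ l.take (i₁ - 1) ∧ e.2 ∉ l.take (i₁ - 1)
          with hcdef
        set Y₁ := G.arcs.filter c with hY₁def
        have hY'p : Y' ≤ G.arcs.filter p' := by rw [← hGsarcs]; exact hY'le
        have hcp : ∀ a : ℕ × ℕ, ¬ (c a ∧ p' a) := by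
          rintro a ⟨⟨h1, _⟩, ⟨h3, _⟩⟩
          exact h3 (List.mem_toFinset.mpr h1)
        refine ⟨Y₁ + Y', ?_, ?_, ?_⟩
        · refine le_trans (add_le_add le_rfl hY'p) ?_
          rw [hY₁def, Multiset.filter_add_filter]
          have h0 : G.arcs.filter (fun a => c a ∧ p' a) = 0 := by
            rw [Multiset.filter_eq_nil]; exact fun a _ => hcp a
          rw [h0, add_zero]
          exact Multiset.filter_le _ _
        · rw [Multiset.card_add]
          have h1 : Y₁.card ≤ t := hcut' (i₁ - 1)
          have h2 : (k + 1) * t = k * t + t := Nat.succ_mul k t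
          omega
        · rintro ⟨J, hJsub, H, hH, hJiso⟩
          have hJverts : J.verts ⊆ G.verts := hJsub.1
          have hJarcs : J.arcs ≤ G.arcs - (Y₁ + Y') := hJsub.2
          have hJsc : J.StronglyConnected := sc_of_iso hJiso (h𝓗 H hH).1
          by_cases hall : ∀ x ∈ J.verts, x ∈ l.take (i₁ - 1)
          · exact hmin ⟨J, ⟨hJverts, le_trans hJarcs tsub_le_self⟩, hall, H, hH, hJiso⟩
          · by_cases hnone : ∀ x ∈ J.verts, x ∉ l.take (i₁ - 1)
            · -- J inside Gs ∖ Y'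
              have hmemp : ∀ a ∈ J.arcs, p' a := fun a ha =>
                ⟨fun h => hnone a.1 (J.mem_fst a ha) (List.mem_toFinset.mp h),
                 fun h => hnone a.2 (J.mem_snd a ha) (List.mem_toFinset.mp h)⟩
              have hfY' : Y'.filter p' = Y' := Multiset.filter_eq_self.mpr
                (fun a ha => (Multiset.mem_filter.mp (Multiset.mem_of_le hY'p ha)).2)
              have hchain : J.arcs ≤ G.arcs.filter p' - Y' := by
                calc J.arcs = J.arcs.filter p' := (Multiset.filter_eq_self.mpr hmemp).symm
                  _ ≤ (G.arcs - (Y₁ + Y')).filter p' := Multiset.filter_le_filter _ hJarcs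
                  _ = G.arcs.filter p' - (Y₁.filter p' + Y'.filter p') := by
                      rw [Multiset.filter_sub, Multiset.filter_add]
                  _ ≤ G.arcs.filter p' - Y' := by
                      apply tsub_le_tsub_left
                      rw [hfY']
                      exact le_add_self
              have hJGs : J.IsSubdigraph (Gs.deleteArcs Y') := by
                refine ⟨fun x hx => ?_, ?_⟩
                · show x ∈ Gs.verts
                  rw [hGsverts]
                  exact Finset.mem_sdiff.mpr ⟨hJverts hx,
                    fun h => hnone x hx (List.mem_toFinset.mp h)⟩
                · show J.arcs ≤ Gs.arcs - Y'
                  rw [hGsarcs]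
                  exact hchain
              exact hY'no ⟨J, hJGs, H, hH, hJiso⟩
            · push_neg at hall hnone
              obtain ⟨v, hvJ, hv⟩ := hall
              obtain ⟨u, huJ, hu⟩ := hnone
              have hreach : J.Reach u v := hJsc.2 u huJ v hvJ
              obtain ⟨a, b, hab, hpa, hpb⟩ := cross_of_rtg hreach hu hv
              have habJ : (a, b) ∈ J.arcs := hab
              have hcY₁ : Multiset.count (a, b) Y₁ = Multiset.count (a, b) G.arcs := by
                rw [hY₁def]
                exact Multiset.count_filter_of_pos ⟨hpa, hpb⟩
              have h1 : Multiset.count (a, b) (G.arcs - (Y₁ + Y')) = 0 := by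
                rw [Multiset.count_sub, Multiset.count_add, hcY₁]
                omega
              have h2 : 0 < Multiset.count (a, b) (G.arcs - (Y₁ + Y')) :=
                Multiset.count_pos.mpr (Multiset.mem_of_le hJarcs habJ)
              omega
    · right
      refine ⟨0, Multiset.zero_le _, by simp, ?_⟩
      rintro ⟨J, hsub, rest⟩
      exact hex ⟨J, ⟨hsub.1, by simpa [Digr.deleteArcs] using hsub.2⟩, rest⟩
end
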